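/- Let g be a Lie algebra with a vector space decomposition g = r ⊕ m ⊕ m⁻ where r, m, m⁻ are Lie subalgebras, [r,m] ⊆ m, [r,m⁻] ⊆ m⁻, and let p = r ⊕ m, p⁻ = r ⊕ m⁻, with p̃ = r ⋉ m^a the Inönü–Wigner contraction of p. Define a map ad* : p̃ → gl(p⁻) by: for x ∈ r and y ∈ p⁻, ad*x(y) = [x,y]; and for x ∈ m and y ∈ p⁻, ad*x(y) = pr_r([x,y]), where pr_r is the projection of g = r ⊕ m ⊕ m⁻ onto r. Then ad* is a morphism of Lie algebras from p̃ to gl(p⁻); i.e., for all x,x' ∈ p̃ and y ∈ p⁻, ad*x(ad*x'(y)) − ad*x'(ad*x(y)) = ad*([x,x']_p̃)(y). -/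
import Mathlib


/-- **The coadjoint action of the contraction `p̃ = r ⋉ mᵃ` on `p⁻`.**
Let `g = r ⊕ m ⊕ m⁻` be a Lie algebra decomposed into Lie subalgebras with
`[r,m] ⊆ m` and `[r,m⁻] ⊆ m⁻`; let `p = r ⊕ m`, `p⁻ = r ⊕ m⁻`, and let
`p̃ = r ⋉ mᵃ` be the Inönü–Wigner contraction of `p` (same bracket as `p` except
`[m,m]_p̃ = 0`, i.e. `[x,x']_p̃ = ⁅x,x'⁆ - ⁅prm x, prm x'⁆`).  Here `prr`, `prm` are the
projections of `g` onto `r` resp. `m` coming from the decomposition.  The map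
`ad* : p̃ → gl(p⁻)` is given by `ad*x(y) = ⁅x,y⁆` for `x ∈ r` and
`ad*x(y) = prr ⁅x,y⁆` for `x ∈ m`; for a general `x ∈ p` this reads
`ad*x(y) = ⁅prr x, y⁆ + prr ⁅prm x, y⁆`.  The claim: `ad*` is a morphism of Lie
algebras from `p̃` to `gl(p⁻)`, i.e. for all `x, x' ∈ p` and `y ∈ p⁻`,
`ad*x(ad*x'(y)) − ad*x'(ad*x(y)) = ad*([x,x']_p̃)(y)`. -/
theorem coadjoint_action_is_lie_morphism
    {k : Type*} [Field k] [CharZero k]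
    {g : Type*} [LieRing g] [LieAlgebra k g]
    (R M Mm : Submodule k g) (prr prm : g →ₗ[k] g)
    -- `prr`, `prm` are the projections onto `r`, `m` for the decomposition `g = r ⊕ m ⊕ m⁻`
    (hprr : ∀ x : g, prr x ∈ R) (hprm : ∀ x : g, prm x ∈ M)
    (hprrR : ∀ x ∈ R, prr x = x) (hprrM : ∀ x ∈ M, prr x = 0) (hprrMm : ∀ x ∈ Mm, prr x = 0)
    (hprmR : ∀ x ∈ R, prm x = 0) (hprmM : ∀ x ∈ M, prm x = x) (hprmMm : ∀ x ∈ Mm, prm x = 0)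
    (hdecomp : ∀ x : g, x - prr x - prm x ∈ Mm)
    -- `r`, `m`, `m⁻` are Lie subalgebras
    (hR : ∀ x ∈ R, ∀ y ∈ R, ⁅x, y⁆ ∈ R)
    (hM : ∀ x ∈ M, ∀ y ∈ M, ⁅x, y⁆ ∈ M)
    (hMm : ∀ x ∈ Mm, ∀ y ∈ Mm, ⁅x, y⁆ ∈ Mm)
    -- `[r,m] ⊆ m` and `[r,m⁻] ⊆ m⁻`
    (hRM : ∀ x ∈ R, ∀ y ∈ M, ⁅x, y⁆ ∈ M)
    (hRMm : ∀ x ∈ R, ∀ y ∈ Mm, ⁅x, y⁆ ∈ Mm) :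
    ∀ x ∈ R ⊔ M, ∀ x' ∈ R ⊔ M, ∀ y ∈ R ⊔ Mm,
      (fun a b => ⁅prr a, b⁆ + prr ⁅prm a, b⁆) x
          ((fun a b => ⁅prr a, b⁆ + prr ⁅prm a, b⁆) x' y)
        - (fun a b => ⁅prr a, b⁆ + prr ⁅prm a, b⁆) x'
          ((fun a b => ⁅prr a, b⁆ + prr ⁅prm a, b⁆) x y)
      = (fun a b => ⁅prr a, b⁆ + prr ⁅prm a, b⁆) (⁅x, x'⁆ - ⁅prm x, prm x'⁆) y := by
  -- helper lemmas
  have hMba : ∀ b ∈ M, ∀ a ∈ R, ⁅b, a⁆ ∈ M := by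
    intro b hb a ha
    rw [← neg_neg ⁅b, a⁆, lie_skew]
    exact M.neg_mem (hRM a ha b hb)
  have L1 : ∀ a ∈ R, ∀ w : g, prr ⁅a, w⁆ = ⁅a, prr w⁆ := by
    intro a ha w
    have hw : w = prr w + prm w + (w - prr w - prm w) := by abel
    calc prr ⁅a, w⁆ = prr ⁅a, prr w⁆ + prr ⁅a, prm w⁆ + prr ⁅a, w - prr w - prm w⁆ := by
          conv_lhs => rw [hw]
          rw [lie_add, lie_add, map_add, map_add]
      _ = ⁅a, prr w⁆ := by
          rw [hprrR _ (hR a ha _ (hprr w)), hprrM _ (hRM a ha _ (hprm w)),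
            hprrMm _ (hRMm a ha _ (hdecomp w)), add_zero, add_zero]
  have L2 : ∀ b ∈ M, ∀ z ∈ R, prr ⁅b, z⁆ = 0 := by
    intro b hb z hz
    exact hprrM _ (hMba b hb z hz)
  intro x hx x' hx' y hy
  obtain ⟨a, ha, b, hb, rfl⟩ := Submodule.mem_sup.mp hx
  obtain ⟨a', ha', b', hb', rfl⟩ := Submodule.mem_sup.mp hx'
  obtain ⟨yr, hyr, ym, hym, rfl⟩ := Submodule.mem_sup.mp hy
  simp only
  have h1 : prr (a + b) = a := by rw [map_add, hprrR a ha, hprrM b hb, add_zero]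
  have h2 : prm (a + b) = b := by rw [map_add, hprmR a ha, hprmM b hb, zero_add]
  have h1' : prr (a' + b') = a' := by rw [map_add, hprrR a' ha', hprrM b' hb', add_zero]
  have h2' : prm (a' + b') = b' := by rw [map_add, hprmR a' ha', hprmM b' hb', zero_add]
  rw [h1, h2, h1', h2']
  -- the contracted bracket
  have hz : ⁅a + b, a' + b'⁆ - ⁅b, b'⁆ = ⁅a, a'⁆ + (⁅a, b'⁆ + ⁅b, a'⁆) := by
    rw [lie_add, add_lie, add_lie]; abel
  have hzM : ⁅a, b'⁆ + ⁅b, a'⁆ ∈ M := M.add_mem (hRM a ha b' hb') (hMba b hb a' ha')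
  have hzr : prr (⁅a + b, a' + b'⁆ - ⁅b, b'⁆) = ⁅a, a'⁆ := by
    rw [hz, map_add, hprrR _ (hR a ha a' ha'), hprrM _ hzM, add_zero]
  have hzm : prm (⁅a + b, a' + b'⁆ - ⁅b, b'⁆) = ⁅a, b'⁆ + ⁅b, a'⁆ := by
    rw [hz, map_add, hprmR _ (hR a ha a' ha'), hprmM _ hzM, zero_add]
  rw [hzr, hzm]
  -- expand everything over y = yr + ym
  simp only [lie_add, add_lie, map_add]
  rw [L2 b' hb' yr hyr, L2 b hb yr hyr,
    L2 b hb _ (hR a' ha' yr hyr), L2 b' hb' _ (hR a ha yr hyr),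
    L2 b hb _ (hprr ⁅b', ym⁆), L2 b' hb' _ (hprr ⁅b, ym⁆),
    L2 _ (hRM a ha b' hb') yr hyr, L2 _ (hMba b hb a' ha') yr hyr]
  have j1 : prr ⁅⁅a, b'⁆, ym⁆ = ⁅a, prr ⁅b', ym⁆⁆ - prr ⁅b', ⁅a, ym⁆⁆ := by
    rw [lie_lie, map_sub, L1 a ha]
  have j2 : prr ⁅⁅b, a'⁆, ym⁆ = prr ⁅b, ⁅a', ym⁆⁆ - ⁅a', prr ⁅b, ym⁆⁆ := by
    rw [lie_lie, map_sub, L1 a' ha']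
  rw [j1, j2, lie_lie a a' yr, lie_lie a a' ym]
  simp only [lie_zero, add_zero, zero_add, map_zero]
  abel
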